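/- Weighted Poincaré inequality with degenerate weight: There is a constant C > 0 such that for every C¹ function g on [-1,1] satisfying ∫_{-1}^{1} h_s(ξ) g(ξ) dξ = 0, one has ∫_{-1}^{1} h_s(ξ) |g(ξ)|² dξ ≤ C ∫_{-1}^{1} h_s(ξ) |g'(ξ)|² dξ. -/

import Mathlib

noncomputable def hs : ℝ → ℝ := fun x =>
  (Real.exp 1 ^ 2 + 1) / (Real.exp 1 ^ 2 - 1) -
    (Real.exp (x + 1) + Real.exp (1 - x)) / (Real.exp 1 ^ 2 - 1)

lemma exp_sq_sub_one_pos : (0:ℝ) < Real.exp 1 ^ 2 - 1 := by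
  have h : (1:ℝ) < Real.exp 1 := by
    have := Real.add_one_lt_exp (x := 1) one_ne_zero
    linarith
  nlinarith

lemma hs_cosh (x : ℝ) :
    Real.exp (x + 1) + Real.exp (1 - x) = 2 * Real.exp 1 * Real.cosh x := by
  rw [Real.cosh_eq, show x + 1 = x + 1 from rfl, Real.exp_add,
    show (1:ℝ) - x = -x + 1 by ring, Real.exp_add]
  ring

lemma hs_anti {x t : ℝ} (h : |t| ≤ |x|) : hs x ≤ hs t := by
  unfold hs
  have hE := exp_sq_sub_one_pos
  have hc : Real.cosh t ≤ Real.cosh x := Real.cosh_le_cosh.2 h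
  have key : Real.exp (t + 1) + Real.exp (1 - t)
      ≤ Real.exp (x + 1) + Real.exp (1 - x) := by
    rw [hs_cosh, hs_cosh]
    have he : (0:ℝ) < Real.exp 1 := Real.exp_pos 1
    nlinarith
  have : (Real.exp (t + 1) + Real.exp (1 - t)) / (Real.exp 1 ^ 2 - 1)
      ≤ (Real.exp (x + 1) + Real.exp (1 - x)) / (Real.exp 1 ^ 2 - 1) :=
    div_le_div_of_nonneg_right key hE.le
  linarith

lemma hs_anti_strict {x t : ℝ} (h : |t| < |x|) : hs x < hs t := by
  unfold hs
  have hE := exp_sq_sub_one_pos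
  have hc : Real.cosh t < Real.cosh x := Real.cosh_lt_cosh.2 h
  have key : Real.exp (t + 1) + Real.exp (1 - t)
      < Real.exp (x + 1) + Real.exp (1 - x) := by
    rw [hs_cosh, hs_cosh]
    have he : (0:ℝ) < Real.exp 1 := Real.exp_pos 1
    nlinarith
  have : (Real.exp (t + 1) + Real.exp (1 - t)) / (Real.exp 1 ^ 2 - 1)
      < (Real.exp (x + 1) + Real.exp (1 - x)) / (Real.exp 1 ^ 2 - 1) :=
    (div_lt_div_iff_of_pos_right hE).2 key
  linarith

lemma hs_one : hs 1 = 0 := by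
  unfold hs
  have h1 : Real.exp ((1:ℝ) + 1) = Real.exp 1 ^ 2 := by
    rw [Real.exp_add]; ring
  have h2 : Real.exp ((1:ℝ) - 1) = 1 := by norm_num
  rw [h1, h2]
  ring

lemma hs_nonneg {x : ℝ} (hx : x ∈ Set.Icc (-1:ℝ) 1) : 0 ≤ hs x := by
  have h : |x| ≤ |(1:ℝ)| := by
    rw [abs_one, abs_le]; exact ⟨hx.1, hx.2⟩
  have h2 := hs_anti (x := (1:ℝ)) (t := x) h
  rwa [hs_one] at h2

lemma hs_pos {x : ℝ} (hx : x ∈ Set.Ioo (-1:ℝ) 1) : 0 < hs x := by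
  have h : |x| < |(1:ℝ)| := by
    rw [abs_one, abs_lt]; exact ⟨hx.1, hx.2⟩
  have h2 := hs_anti_strict (x := (1:ℝ)) (t := x) h
  rwa [hs_one] at h2

lemma continuous_hs : Continuous hs := by
  unfold hs
  fun_prop

/-- Weighted Cauchy–Schwarz for interval integrals. -/
lemma weighted_cs (w f : ℝ → ℝ) (a b : ℝ) (hab : a ≤ b)
    (hw : IntervalIntegrable w MeasureTheory.volume a b)
    (hwf : IntervalIntegrable (fun x => w x * f x) MeasureTheory.volume a b)
    (hwf2 : IntervalIntegrable (fun x => w x * f x ^ 2) MeasureTheory.volume a b)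
    (hw0 : ∀ x ∈ Set.Icc a b, 0 ≤ w x)
    (hW : 0 < ∫ x in a..b, w x) :
    (∫ x in a..b, w x * f x) ^ 2
      ≤ (∫ x in a..b, w x) * ∫ x in a..b, w x * f x ^ 2 := by
  set W := ∫ x in a..b, w x with hWdef
  set S := ∫ x in a..b, w x * f x with hSdef
  set c := S / W with hcdef
  have key : 0 ≤ ∫ x in a..b, (w x * f x ^ 2 - (2 * c) * (w x * f x) + c ^ 2 * w x) := by
    have heq : ∀ x ∈ Set.Icc a b,
        0 ≤ w x * f x ^ 2 - (2 * c) * (w x * f x) + c ^ 2 * w x := by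
      intro x hx
      have h0 := hw0 x hx
      nlinarith [sq_nonneg (f x - c), mul_nonneg h0 (sq_nonneg (f x - c))]
    have hint : IntervalIntegrable
        (fun x => w x * f x ^ 2 - (2 * c) * (w x * f x) + c ^ 2 * w x)
        MeasureTheory.volume a b :=
      (hwf2.sub (hwf.const_mul _)).add (hw.const_mul _)
    calc (0:ℝ) = ∫ _ in a..b, (0:ℝ) := by simp
    _ ≤ _ := intervalIntegral.integral_mono_on hab
        (by simp) hint heq
  have hexp : (∫ x in a..b, (w x * f x ^ 2 - (2 * c) * (w x * f x) + c ^ 2 * w x))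
      = (∫ x in a..b, w x * f x ^ 2) - 2 * c * S + c ^ 2 * W := by
    rw [intervalIntegral.integral_add (hwf2.sub (hwf.const_mul _)) (hw.const_mul _),
      intervalIntegral.integral_sub hwf2 (hwf.const_mul _),
      intervalIntegral.integral_const_mul, intervalIntegral.integral_const_mul]
  rw [hexp] at key
  have hc2 : c ^ 2 * W = S ^ 2 / W := by
    field_simp [hcdef]
    rw [hcdef, div_pow, div_mul_cancel₀ _ (pow_ne_zero 2 hW.ne')]
  have hc1 : 2 * c * S = 2 * (S ^ 2 / W) := by
    field_simp [hcdef]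
    rw [hcdef, div_mul_eq_mul_div, div_mul_cancel₀ _ hW.ne']; ring
  rw [hc1, hc2] at key
  have : S ^ 2 / W ≤ ∫ x in a..b, w x * f x ^ 2 := by linarith
  calc S ^ 2 = (S ^ 2 / W) * W := by field_simp
  _ ≤ (∫ x in a..b, w x * f x ^ 2) * W := by
      exact mul_le_mul_of_nonneg_right this hW.le
  _ = W * ∫ x in a..b, w x * f x ^ 2 := by ring

lemma hs_neg_one : hs (-1) = 0 := by
  unfold hs
  have h1 : Real.exp ((-1:ℝ) + 1) = 1 := by norm_num
  have h2 : Real.exp ((1:ℝ) - -1) = Real.exp 1 ^ 2 := by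
    rw [show (1:ℝ) - -1 = 1 + 1 by ring, Real.exp_add]; ring
  rw [h1, h2]
  ring

theorem stmt_7 :
    ∃ C > (0 : ℝ), ∀ g : ℝ → ℝ, ContDiffOn ℝ 1 g (Set.Icc (-1 : ℝ) 1) →
      (∫ ξ in (-1 : ℝ)..1, hs ξ * g ξ) = 0 →
      ∫ ξ in (-1 : ℝ)..1, hs ξ * (g ξ) ^ 2 ≤
        C * ∫ ξ in (-1 : ℝ)..1, hs ξ * (deriv g ξ) ^ 2 := by
  refine ⟨8, by norm_num, ?_⟩
  intro g hg hzero
  have hm1 : (-1:ℝ) ≤ 1 := by norm_num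
  set I : Set ℝ := Set.Icc (-1:ℝ) 1 with hIdef
  have huniq : UniqueDiffOn ℝ I := uniqueDiffOn_Icc (by norm_num)
  have hgc : ContinuousOn g I := hg.continuousOn
  set φ := derivWithin g I with hφ
  have hφc : ContinuousOn φ I := hg.continuousOn_derivWithin huniq le_rfl
  have heqd : ∀ x ∈ Set.Ioo (-1:ℝ) 1, deriv g x = φ x := by
    intro x hx
    rw [hφ, derivWithin_of_mem_nhds (Icc_mem_nhds hx.1 hx.2)]
  have hdiff : ∀ x ∈ Set.Ioo (-1:ℝ) 1, DifferentiableAt ℝ g x := by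
    intro x hx
    exact ((hg.differentiableOn one_ne_zero) x (Set.Ioo_subset_Icc_self hx)).differentiableAt
      (Icc_mem_nhds hx.1 hx.2)
  have hdc : ContinuousOn (deriv g) (Set.Ioo (-1:ℝ) 1) :=
    (hφc.mono Set.Ioo_subset_Icc_self).congr heqd
  have huIcc : Set.uIcc (-1:ℝ) 1 = I := Set.uIcc_of_le hm1
  set D := ∫ ξ in (-1:ℝ)..1, hs ξ * (deriv g ξ) ^ 2 with hD
  -- integrability of the derivative integrand on [-1,1]
  have hIφ : IntervalIntegrable (fun x => hs x * φ x ^ 2) MeasureTheory.volume (-1) 1 :=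
    ContinuousOn.intervalIntegrable (by rw [huIcc]; exact continuous_hs.continuousOn.mul (hφc.pow 2))
  have haeeq : (fun x => hs x * φ x ^ 2)
      =ᵐ[MeasureTheory.volume.restrict (Set.Ioc (-1:ℝ) 1)]
      (fun x => hs x * (deriv g x) ^ 2) := by
    have hre : MeasureTheory.volume.restrict (Set.Ioc (-1:ℝ) 1)
        = MeasureTheory.volume.restrict (Set.Ioo (-1:ℝ) 1) :=
      (MeasureTheory.Measure.restrict_congr_set MeasureTheory.Ioo_ae_eq_Ioc).symm
    rw [hre]
    refine (MeasureTheory.ae_restrict_iff' measurableSet_Ioo).2 ?_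
    filter_upwards with x hx
    rw [heqd x hx]
  have hID : IntervalIntegrable (fun x => hs x * (deriv g x) ^ 2) MeasureTheory.volume (-1) 1 := by
    rw [intervalIntegrable_iff_integrableOn_Ioc_of_le hm1] at hIφ ⊢
    exact hIφ.congr haeeq
  have hD0 : 0 ≤ D := by
    rw [hD]
    apply intervalIntegral.integral_nonneg hm1
    intro x hx
    exact mul_nonneg (hs_nonneg hx) (sq_nonneg _)
  -- FTC
  have hFTC : ∀ x ∈ Set.Ioo (-1:ℝ) 1, g x - g 0 = ∫ t in (0:ℝ)..x, deriv g t := by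
    intro x hx
    obtain ⟨hx1, hx2⟩ := hx
    have hsub : Set.uIcc (0:ℝ) x ⊆ Set.Ioo (-1:ℝ) 1 := by
      intro t ht
      rw [Set.mem_uIcc] at ht
      refine ⟨?_, ?_⟩ <;> rcases ht with ⟨h1, h2⟩ | ⟨h1, h2⟩ <;> linarith
    exact (intervalIntegral.integral_eq_sub_of_hasDerivAt
      (fun t ht => (hdiff t (hsub ht)).hasDerivAt)
      ((hdc.mono hsub).intervalIntegrable)).symm
  -- ae nonnegativity of the derivative integrand
  have haepos : 0 ≤ᵐ[MeasureTheory.volume.restrict (Set.Ioc (-1:ℝ) 1)]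
      (fun t => hs t * (deriv g t) ^ 2) := by
    refine (MeasureTheory.ae_restrict_iff' measurableSet_Ioc).2 ?_
    filter_upwards with t ht
    exact mul_nonneg (hs_nonneg (Set.Ioc_subset_Icc_self ht)) (sq_nonneg _)
  -- Step B: pointwise bound on the open interval
  have stepB : ∀ x ∈ Set.Ioo (-1:ℝ) 1, hs x * (g x - g 0) ^ 2 ≤ D := by
    intro x hx
    obtain ⟨hx1, hx2⟩ := hx
    have hhsx : 0 ≤ hs x := hs_nonneg ⟨hx1.le, hx2.le⟩
    rcases lt_trichotomy x 0 with hneg | hzero' | hpos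
    · -- negative case, work on [x, 0]
      have hsub : Set.Icc x (0:ℝ) ⊆ Set.Ioo (-1:ℝ) 1 :=
        fun t ht => ⟨by linarith [ht.1], by linarith [ht.2]⟩
      have hsub' : Set.uIcc x (0:ℝ) ⊆ Set.Ioo (-1:ℝ) 1 := by
        rwa [Set.uIcc_of_le hneg.le]
      have hcont : ContinuousOn (deriv g) (Set.Icc x 0) := hdc.mono hsub
      have hi1 : IntervalIntegrable (deriv g) MeasureTheory.volume x 0 :=
        (hdc.mono hsub').intervalIntegrable
      have hi2 : IntervalIntegrable (fun t => (deriv g t) ^ 2) MeasureTheory.volume x 0 :=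
        ((hdc.mono hsub').pow 2).intervalIntegrable
      have hcs := weighted_cs (fun _ => 1) (deriv g) x 0 hneg.le
        intervalIntegrable_const (by simpa using hi1) (by simpa using hi2)
        (fun t _ => zero_le_one) (by simp; linarith)
      simp only [one_mul, intervalIntegral.integral_const, smul_eq_mul, mul_one] at hcs
      have hsym : g x - g 0 = -∫ t in x..(0:ℝ), deriv g t := by
        rw [hFTC x ⟨hx1, hx2⟩, intervalIntegral.integral_symm]
      have hmono : ∫ t in x..(0:ℝ), hs x * (deriv g t) ^ 2
          ≤ ∫ t in x..(0:ℝ), hs t * (deriv g t) ^ 2 := by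
        apply intervalIntegral.integral_mono_on hneg.le (hi2.const_mul _)
          (ContinuousOn.intervalIntegrable (by
            rw [Set.uIcc_of_le hneg.le]
            exact (continuous_hs.continuousOn.mono hsub).mul (hcont.pow 2)))
        intro t ht
        have habs : |t| ≤ |x| := by
          rw [abs_of_nonpos ht.2, abs_of_nonpos hneg.le]; linarith [ht.1]
        exact mul_le_mul_of_nonneg_right (hs_anti habs) (sq_nonneg _)
      have hsubint : ∫ t in x..(0:ℝ), hs t * (deriv g t) ^ 2 ≤ D := by
        rw [hD]
        exact intervalIntegral.integral_mono_interval (by linarith) hneg.le (by norm_num)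
          haepos hID
      calc hs x * (g x - g 0) ^ 2 = hs x * (∫ t in x..(0:ℝ), deriv g t) ^ 2 := by
            rw [hsym]; ring
      _ ≤ hs x * ((0 - x) * ∫ t in x..(0:ℝ), (deriv g t) ^ 2) :=
            mul_le_mul_of_nonneg_left hcs hhsx
      _ = (0 - x) * ∫ t in x..(0:ℝ), hs x * (deriv g t) ^ 2 := by
            rw [intervalIntegral.integral_const_mul]; ring
      _ ≤ (0 - x) * ∫ t in x..(0:ℝ), hs t * (deriv g t) ^ 2 :=
            mul_le_mul_of_nonneg_left hmono (by linarith)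
      _ ≤ (0 - x) * D := mul_le_mul_of_nonneg_left hsubint (by linarith)
      _ ≤ D := by nlinarith
    · simp [hzero', hD0]
    · -- positive case, work on [0, x]
      have hsub : Set.Icc (0:ℝ) x ⊆ Set.Ioo (-1:ℝ) 1 :=
        fun t ht => ⟨by linarith [ht.1], by linarith [ht.2]⟩
      have hsub' : Set.uIcc (0:ℝ) x ⊆ Set.Ioo (-1:ℝ) 1 := by
        rwa [Set.uIcc_of_le hpos.le]
      have hcont : ContinuousOn (deriv g) (Set.Icc 0 x) := hdc.mono hsub
      have hi1 : IntervalIntegrable (deriv g) MeasureTheory.volume 0 x :=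
        (hdc.mono hsub').intervalIntegrable
      have hi2 : IntervalIntegrable (fun t => (deriv g t) ^ 2) MeasureTheory.volume 0 x :=
        ((hdc.mono hsub').pow 2).intervalIntegrable
      have hcs := weighted_cs (fun _ => 1) (deriv g) 0 x hpos.le
        intervalIntegrable_const (by simpa using hi1) (by simpa using hi2)
        (fun t _ => zero_le_one) (by simp; linarith)
      simp only [one_mul, intervalIntegral.integral_const, smul_eq_mul, mul_one] at hcs
      have hmono : ∫ t in (0:ℝ)..x, hs x * (deriv g t) ^ 2
          ≤ ∫ t in (0:ℝ)..x, hs t * (deriv g t) ^ 2 := by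
        apply intervalIntegral.integral_mono_on hpos.le (hi2.const_mul _)
          (ContinuousOn.intervalIntegrable (by
            rw [Set.uIcc_of_le hpos.le]
            exact (continuous_hs.continuousOn.mono hsub).mul (hcont.pow 2)))
        intro t ht
        have habs : |t| ≤ |x| := by
          rw [abs_of_nonneg ht.1, abs_of_nonneg hpos.le]; exact ht.2
        exact mul_le_mul_of_nonneg_right (hs_anti habs) (sq_nonneg _)
      have hsubint : ∫ t in (0:ℝ)..x, hs t * (deriv g t) ^ 2 ≤ D := by
        rw [hD]
        exact intervalIntegral.integral_mono_interval (by norm_num) hpos.le hx2.le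
          haepos hID
      calc hs x * (g x - g 0) ^ 2 = hs x * (∫ t in (0:ℝ)..x, deriv g t) ^ 2 := by
            rw [hFTC x ⟨hx1, hx2⟩]
      _ ≤ hs x * ((x - 0) * ∫ t in (0:ℝ)..x, (deriv g t) ^ 2) :=
            mul_le_mul_of_nonneg_left hcs hhsx
      _ = (x - 0) * ∫ t in (0:ℝ)..x, hs x * (deriv g t) ^ 2 := by
            rw [intervalIntegral.integral_const_mul]; ring
      _ ≤ (x - 0) * ∫ t in (0:ℝ)..x, hs t * (deriv g t) ^ 2 :=
            mul_le_mul_of_nonneg_left hmono (by linarith)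
      _ ≤ (x - 0) * D := mul_le_mul_of_nonneg_left hsubint (by linarith)
      _ ≤ D := by nlinarith
  -- extend pointwise bound to the closed interval
  set g0 := g 0 with hg0def
  have stepB' : ∀ x ∈ I, hs x * (g x - g0) ^ 2 ≤ D := by
    intro x hx
    rcases eq_or_lt_of_le hx.1 with h1 | h1
    · rw [← h1, hs_neg_one]; simpa using hD0
    rcases eq_or_lt_of_le hx.2 with h2 | h2
    · rw [h2, hs_one]; simpa using hD0
    exact stepB x ⟨h1, h2⟩
  -- integrabilities on [-1,1]
  have ihs : IntervalIntegrable hs MeasureTheory.volume (-1) 1 :=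
    continuous_hs.intervalIntegrable _ _
  have ihsg : IntervalIntegrable (fun x => hs x * g x) MeasureTheory.volume (-1) 1 :=
    ContinuousOn.intervalIntegrable (by rw [huIcc]; exact continuous_hs.continuousOn.mul hgc)
  have ihsf : IntervalIntegrable (fun x => hs x * (g x - g0)) MeasureTheory.volume (-1) 1 :=
    ContinuousOn.intervalIntegrable (by
      rw [huIcc]; exact continuous_hs.continuousOn.mul (hgc.sub continuousOn_const))
  have ihsf2 : IntervalIntegrable (fun x => hs x * (g x - g0) ^ 2) MeasureTheory.volume (-1) 1 :=
    ContinuousOn.intervalIntegrable (by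
      rw [huIcc]; exact continuous_hs.continuousOn.mul ((hgc.sub continuousOn_const).pow 2))
  have ihsg2 : IntervalIntegrable (fun x => hs x * (g x) ^ 2) MeasureTheory.volume (-1) 1 :=
    ContinuousOn.intervalIntegrable (by
      rw [huIcc]; exact continuous_hs.continuousOn.mul (hgc.pow 2))
  set H := ∫ ξ in (-1:ℝ)..1, hs ξ with hH
  have hHpos : 0 < H := by
    rw [hH]
    exact intervalIntegral.intervalIntegral_pos_of_pos_on ihs (fun x hx => hs_pos hx) (by norm_num)
  set K := ∫ ξ in (-1:ℝ)..1, hs ξ * (g ξ - g0) ^ 2 with hK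
  -- the constraint
  have hsum : ∫ ξ in (-1:ℝ)..1, hs ξ * (g ξ - g0) = -(g0 * H) := by
    have heq2 : (fun ξ => hs ξ * (g ξ - g0)) = fun ξ => hs ξ * g ξ - g0 * hs ξ := by
      funext ξ; ring
    rw [heq2, intervalIntegral.integral_sub ihsg (ihs.const_mul g0), hzero,
      intervalIntegral.integral_const_mul, hH]
    ring
  -- Cauchy-Schwarz with weight hs
  have hcs2 : (∫ ξ in (-1:ℝ)..1, hs ξ * (g ξ - g0)) ^ 2 ≤ H * K :=
    weighted_cs hs (fun x => g x - g0) (-1) 1 hm1 ihs ihsf ihsf2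
      (fun x hx => hs_nonneg hx) hHpos
  have hg0b : g0 ^ 2 * H ≤ K := by
    rw [hsum] at hcs2
    nlinarith [hHpos, hcs2]
  -- K ≤ 2 D
  have hKD : K ≤ 2 * D := by
    rw [hK]
    calc (∫ ξ in (-1:ℝ)..1, hs ξ * (g ξ - g0) ^ 2)
        ≤ ∫ _ in (-1:ℝ)..1, D :=
          intervalIntegral.integral_mono_on hm1 ihsf2 intervalIntegrable_const stepB'
    _ = 2 * D := by
          rw [intervalIntegral.integral_const]; norm_num
  -- final assembly
  have hptwise : ∀ x ∈ I, hs x * (g x) ^ 2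
      ≤ 2 * g0 ^ 2 * hs x + 2 * (hs x * (g x - g0) ^ 2) := by
    intro x hx
    have h0 := hs_nonneg hx
    nlinarith [mul_nonneg h0 (sq_nonneg (g x - 2 * g0))]
  have hfinal : ∫ ξ in (-1:ℝ)..1, hs ξ * (g ξ) ^ 2 ≤ 2 * g0 ^ 2 * H + 2 * K := by
    calc ∫ ξ in (-1:ℝ)..1, hs ξ * (g ξ) ^ 2
        ≤ ∫ ξ in (-1:ℝ)..1, (2 * g0 ^ 2 * hs ξ + 2 * (hs ξ * (g ξ - g0) ^ 2)) :=
          intervalIntegral.integral_mono_on hm1 ihsg2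
            ((ihs.const_mul _).add (ihsf2.const_mul _)) hptwise
    _ = 2 * g0 ^ 2 * H + 2 * K := by
          rw [intervalIntegral.integral_add (ihs.const_mul _) (ihsf2.const_mul _),
            intervalIntegral.integral_const_mul, intervalIntegral.integral_const_mul, hH, hK]
  have : ∫ ξ in (-1:ℝ)..1, hs ξ * (g ξ) ^ 2 ≤ 8 * D := by nlinarith [hg0b, hKD, hfinal]
  exact this
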